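/- arXiv:1206.6160 — 7 statements merged into one kernel-verified Lean document; each statement's English description precedes it below -/
import Mathlib

section
/- Let G be a finite group and let A = {a₁, …, aₙ} and B = {b₁, …, bₘ} be two non-empty subsets of G (with the aᵢ pairwise distinct and the bⱼ pairwise distinct) such that n + m − 1 ≤ p(G). Then there exist indices i₂, …, iₙ with 1 ≤ i₂, …, iₙ ≤ m such that the n + m − 1 elements a₁·b₁, a₁·b₂, …, a₁·bₘ, a₂·b_{i₂}, …, aₙ·b_{iₙ} are all distinct. -/
open Finset
open scoped Pointwise

lemma minFac_card_le_minOrder {G : Type*} [Group G] [Fintype G] :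
    ((Fintype.card G).minFac : ℕ∞) ≤ Monoid.minOrder G := by
  rw [Monoid.le_minOrder]
  intro g hg _
  have h1 : orderOf g ∣ Fintype.card G := orderOf_dvd_card
  have h2 : 2 ≤ orderOf g := by
    have h3 := orderOf_pos g
    have h4 : orderOf g ≠ 1 := fun h => hg (orderOf_eq_one_iff.1 h)
    omega
  exact_mod_cast Nat.minFac_le_of_dvd h2 h1

/-- Given subsets `A = {a₁,…,aₙ}` and `B = {b₁,…,bₘ}` of a finite group `G`
with `n + m − 1 ≤ p(G)`, there exist indices `i₂,…,iₙ` such that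
`a₁·b₁, …, a₁·bₘ, a₂·b_{i₂}, …, aₙ·b_{iₙ}` are all distinct. -/
theorem stmt_3 {G : Type*} [Group G] [Fintype G] {n m : ℕ}
    (hn : 0 < n) (hm : 0 < m)
    (a : Fin n → G) (b : Fin m → G)
    (ha : Function.Injective a) (hb : Function.Injective b)
    (hnm : n + m - 1 ≤ (Fintype.card G).minFac) :
    ∃ k : Fin n → Fin m,
      Function.Injective
        (Sum.elim (fun j : Fin m => a ⟨0, hn⟩ * b j)
          (fun i : {i : Fin n // i ≠ ⟨0, hn⟩} => a i.1 * b (k i.1))) := by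
  classical
  set a0 : Fin n := ⟨0, hn⟩ with ha0
  set B : Finset G := Finset.image b Finset.univ with hB
  have hBcard : #B = m := by
    rw [hB, Finset.card_image_of_injective _ hb, Finset.card_univ, Fintype.card_fin]
  set B0 : Finset G := Finset.image (fun j => a a0 * b j) Finset.univ with hB0
  have hB0card : #B0 = m := by
    rw [hB0, Finset.card_image_of_injective, Finset.card_univ, Fintype.card_fin]
    intro x y hxy
    exact hb (mul_left_cancel hxy)
  -- the candidate sets for Hall's theorem
  set t : {i : Fin n // i ≠ a0} → Finset G :=
    fun i => (Finset.image (fun j => a i.1 * b j) Finset.univ) \ B0 with ht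
  -- Hall's condition
  have hall : ∀ s : Finset {i : Fin n // i ≠ a0}, #s ≤ #(s.biUnion t) := by
    intro s
    set A : Finset G := insert (a a0) (s.image (fun i => a i.1)) with hA
    have hAcard : #A = #s + 1 := by
      rw [hA, Finset.card_insert_of_notMem, Finset.card_image_of_injective _ fun x y hxy =>
        Subtype.ext (ha hxy)]
      intro hmem
      obtain ⟨i, _, hi⟩ := Finset.mem_image.1 hmem
      exact i.2 (ha hi)
    have hsub : (A * B) \ B0 ⊆ s.biUnion t := by
      intro x hx
      obtain ⟨hx1, hx2⟩ := Finset.mem_sdiff.1 hx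
      obtain ⟨u, hu, v, hv, rfl⟩ := Finset.mem_mul.1 hx1
      obtain ⟨j, _, rfl⟩ := Finset.mem_image.1 hv
      rcases Finset.mem_insert.1 hu with rfl | hu'
      · exact absurd (Finset.mem_image.2 ⟨j, Finset.mem_univ _, rfl⟩) hx2
      · obtain ⟨i, hi, rfl⟩ := Finset.mem_image.1 hu'
        exact Finset.mem_biUnion.2 ⟨i, hi, Finset.mem_sdiff.2
          ⟨Finset.mem_image.2 ⟨j, Finset.mem_univ _, rfl⟩, hx2⟩⟩
    have hsn : #s + 1 ≤ n := by
      have : #s ≤ n - 1 := by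
        have := Finset.card_le_card (Finset.subset_univ s)
        have hcard : Fintype.card {i : Fin n // i ≠ a0} = n - 1 := by
          rw [Fintype.card_subtype_compl, Fintype.card_fin, Fintype.card_subtype_eq]
        simpa [Finset.card_univ, hcard] using this
      omega
    have hcd : (#s + m : ℕ∞) ≤ #(A * B) := by
      have h1 := cauchy_davenport_minOrder_mul (α := G)
        (s := A) (t := B) ⟨_, Finset.mem_insert_self _ _⟩
        ⟨b ⟨0, hm⟩, Finset.mem_image.2 ⟨⟨0, hm⟩, Finset.mem_univ _, rfl⟩⟩
      have h2 : (↑(#s + m) : ℕ∞) ≤ min (Monoid.minOrder G) ↑(#A + #B - 1) := by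
        apply le_min
        · refine le_trans ?_ minFac_card_le_minOrder
          exact_mod_cast le_trans (by omega : #s + m ≤ n + m - 1) hnm
        · have : #s + m ≤ #A + #B - 1 := by omega
          exact_mod_cast this
      exact h2.trans h1
    have hcd' : #s + m ≤ #(A * B) := by exact_mod_cast hcd
    calc #s = #s + m - #B0 := by omega
    _ ≤ #(A * B) - #B0 := by omega
    _ ≤ #((A * B) \ B0) := le_card_sdiff _ _
    _ ≤ #(s.biUnion t) := Finset.card_le_card hsub
  obtain ⟨f, hf, hft⟩ := (Finset.all_card_le_biUnion_card_iff_exists_injective t).1 hall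
  -- extract indices
  have hchoice : ∀ i : {i : Fin n // i ≠ a0}, ∃ j : Fin m, a i.1 * b j = f i := by
    intro i
    have := (Finset.mem_sdiff.1 (hft i)).1
    obtain ⟨j, _, hj⟩ := Finset.mem_image.1 this
    exact ⟨j, hj⟩
  choose k' hk' using hchoice
  refine ⟨fun i => if h : i = a0 then ⟨0, hm⟩ else k' ⟨i, h⟩, ?_⟩
  have hkeq : ∀ i : {i : Fin n // i ≠ a0},
      a i.1 * b (if h : i.1 = a0 then ⟨0, hm⟩ else k' ⟨i.1, h⟩) = f i := by
    intro i
    rw [dif_neg i.2]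
    exact hk' i
  intro x y hxy
  have hnot : ∀ (i : {i : Fin n // i ≠ a0}) (j : Fin m), f i ≠ a a0 * b j := by
    intro i j hc
    exact (Finset.mem_sdiff.1 (hft i)).2
      (hc ▸ Finset.mem_image.2 ⟨j, Finset.mem_univ _, rfl⟩)
  rcases x with j | i <;> rcases y with j' | i'
  · simp only [Sum.elim_inl] at hxy
    exact congrArg Sum.inl (hb (mul_left_cancel hxy))
  · simp only [Sum.elim_inl, Sum.elim_inr] at hxy
    exact absurd ((hkeq i').symm.trans hxy.symm) (hnot i' j)
  · simp only [Sum.elim_inl, Sum.elim_inr] at hxy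
    exact absurd ((hkeq i).symm.trans hxy) (hnot i j')
  · simp only [Sum.elim_inr] at hxy
    have : f i = f i' := by rw [← hkeq i, ← hkeq i', hxy]
    exact congrArg Sum.inr (hf this)
end

section
/- Let G be a finite group with p(G) > 2 and let σ be an automorphism of G of odd order. Let x₁, x₂, y ∈ G with x₁ ≠ x₂. If the set {σ(x₁)·y, σ(x₂)·y, σ(y)·x₁, σ(y)·x₂} has exactly 2 elements, then σ(x₁)·y = σ(y)·x₁ and σ(x₂)·y = σ(y)·x₂. -/
/-- Let `G` be a finite group with `p(G) > 2` and `σ` an automorphism of odd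
order. If `x₁ ≠ x₂` and `{σ(x₁)·y, σ(x₂)·y, σ(y)·x₁, σ(y)·x₂}` has exactly 2
elements, then `σ(xᵢ)·y = σ(y)·xᵢ` for `i = 1, 2`. -/
theorem stmt_6 {G : Type*} [Group G] [Fintype G] [DecidableEq G]
    (hp : 2 < (Fintype.card G).minFac) (σ : MulAut G) (hσ : Odd (orderOf σ))
    (x₁ x₂ y : G) (hx : x₁ ≠ x₂)
    (hcard : ({σ x₁ * y, σ x₂ * y, σ y * x₁, σ y * x₂} : Finset G).card = 2) :
    σ x₁ * y = σ y * x₁ ∧ σ x₂ * y = σ y * x₂ := by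
  have hodd : Odd (Fintype.card G) := by
    rcases Nat.even_or_odd (Fintype.card G) with he | ho
    · exact absurd (Nat.minFac_le_of_dvd le_rfl he.two_dvd) (by omega)
    · exact ho
  have ha : σ x₁ * y ≠ σ x₂ * y := by
    intro h; exact hx (σ.injective (mul_right_cancel h))
  have hb : σ y * x₁ ≠ σ y * x₂ := by
    intro h; exact hx (mul_left_cancel h)
  have hsub : ({σ x₁ * y, σ x₂ * y} : Finset G) ⊆
      ({σ x₁ * y, σ x₂ * y, σ y * x₁, σ y * x₂} : Finset G) := by
    intro a haa
    simp only [Finset.mem_insert, Finset.mem_singleton] at haa ⊢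
    tauto
  have hcard2 : ({σ x₁ * y, σ x₂ * y} : Finset G).card = 2 := Finset.card_pair ha
  have heq : ({σ x₁ * y, σ x₂ * y} : Finset G) =
      ({σ x₁ * y, σ x₂ * y, σ y * x₁, σ y * x₂} : Finset G) :=
    Finset.eq_of_subset_of_card_le hsub (by rw [hcard, hcard2])
  have hb1 : σ y * x₁ = σ x₁ * y ∨ σ y * x₁ = σ x₂ * y := by
    have : σ y * x₁ ∈ ({σ x₁ * y, σ x₂ * y} : Finset G) := by
      rw [heq]; simp
    simpa using this
  have hb2 : σ y * x₂ = σ x₁ * y ∨ σ y * x₂ = σ x₂ * y := by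
    have : σ y * x₂ ∈ ({σ x₁ * y, σ x₂ * y} : Finset G) := by
      rw [heq]; simp
    simpa using this
  rcases hb1 with e1 | e1 <;> rcases hb2 with e2 | e2
  · exact absurd (e1.trans e2.symm) hb
  · exact ⟨e1.symm, e2.symm⟩
  · -- cross case: σ y * x₁ = σ x₂ * y and σ y * x₂ = σ x₁ * y
    exfalso
    set t := x₁ * x₂⁻¹ with ht_def
    set c := σ y with hc_def
    have ht1 : t ≠ 1 := by
      simp only [ht_def, ne_eq, mul_inv_eq_one]
      exact hx
    have h1 : σ x₁ = c * x₂ * y⁻¹ := by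
      rw [eq_mul_inv_iff_mul_eq]; exact e2.symm
    have h2 : σ x₂ = c * x₁ * y⁻¹ := by
      rw [eq_mul_inv_iff_mul_eq]; exact e1.symm
    have hkey : σ t = c * t⁻¹ * c⁻¹ := by
      have : σ t = σ x₁ * (σ x₂)⁻¹ := by simp [ht_def]
      rw [this, h1, h2, ht_def]
      group
    have main : ∀ k : ℕ, ∃ g : G, (σ ^ (2 * k + 1)) t = g * t⁻¹ * g⁻¹ := by
      intro k
      induction k with
      | zero => exact ⟨c, by simpa using hkey⟩
      | succ k ih =>
        obtain ⟨g, hg⟩ := ih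
        refine ⟨σ (σ g) * σ c * c, ?_⟩
        have hstep : (σ ^ (2 * (k + 1) + 1)) t = σ (σ ((σ ^ (2 * k + 1)) t)) := by
          rw [show 2 * (k + 1) + 1 = 1 + (1 + (2 * k + 1)) by ring, pow_add, pow_add,
            pow_one]
          rfl
        rw [hstep, hg]
        simp only [map_mul, map_inv, hkey]
        group
    obtain ⟨k, hk⟩ := hσ
    obtain ⟨g, hg⟩ := main k
    rw [← hk, pow_orderOf_eq_one] at hg
    -- hg : (1 : MulAut G) t = g * t⁻¹ * g⁻¹, i.e. t = g * t⁻¹ * g⁻¹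
    have hg' : t = g * t⁻¹ * g⁻¹ := hg
    have hgt : g * t * g⁻¹ = t⁻¹ := by
      have := congrArg (·⁻¹) hg'
      simp only [mul_inv_rev, inv_inv] at this
      rw [this]; group
    have hcomm : Commute (g * g) t := by
      have h : (g * g) * t * (g * g)⁻¹ = t := by
        have : (g * g) * t * (g * g)⁻¹ = g * (g * t * g⁻¹) * g⁻¹ := by group
        rw [this, hgt, ← hg']
      calc (g * g) * t = ((g * g) * t * (g * g)⁻¹) * (g * g) := by group
        _ = t * (g * g) := by rw [h]
    have hgodd : Odd (orderOf g) := by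
      rcases Nat.even_or_odd (orderOf g) with he | ho
      · exact absurd (hodd) (by
          rw [← Nat.not_even_iff_odd]
          intro _
          exact (Nat.not_even_iff_odd.mpr hodd)
            ((he.two_dvd.trans (orderOf_dvd_card)).elim fun m hm => ⟨m, by omega⟩))
      · exact ho
    have hcg : Commute g t := by
      obtain ⟨j, hj⟩ := hgodd
      have hgpow : g = (g * g) ^ (j + 1) := by
        have : (g * g) ^ (j + 1) = g ^ (2 * j + 1) * g := by
          rw [← pow_two, ← pow_mul]
          rw [show 2 * (j + 1) = (2 * j + 1) + 1 by ring, pow_succ]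
        rw [this, ← hj, pow_orderOf_eq_one, one_mul]
      calc g * t = (g * g) ^ (j + 1) * t := by rw [← hgpow]
        _ = t * (g * g) ^ (j + 1) := (hcomm.pow_left _).eq
        _ = t * g := by rw [← hgpow]
    have ht2 : t * t = 1 := by
      have : t = t⁻¹ := by
        rw [← hgt, hcg.eq]; group
      nth_rewrite 1 [this]
      exact inv_mul_cancel t
    have htdvd : orderOf t ∣ 2 := orderOf_dvd_of_pow_eq_one (by rw [pow_two]; exact ht2)
    have htodd : Odd (orderOf t) := by
      rcases Nat.even_or_odd (orderOf t) with he | ho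
      · exfalso
        have : (2 : ℕ) ∣ Fintype.card G := he.two_dvd.trans orderOf_dvd_card
        exact (Nat.not_even_iff_odd.mpr hodd) ((even_iff_two_dvd).mpr this)
      · exact ho
    rcases (Nat.dvd_prime Nat.prime_two).mp htdvd with h | h
    · exact ht1 (orderOf_eq_one_iff.mp h)
    · rw [h] at htodd
      exact (Nat.not_even_iff_odd.mpr htodd) even_two
  · exact absurd (e1.trans e2.symm) hb
end

section
/- Let G be a finite group with p(G) > 3 and let σ be an automorphism of G of odd order. Let x₁, x₂, y₁, y₂ ∈ G with x₁ ≠ x₂ and y₁ ≠ y₂. Suppose σ(x₁)·x₂ = σ(x₂)·x₁ and σ(y₁)·y₂ = σ(y₂)·y₁, and suppose the set {σ(x₁)·y₁, σ(x₁)·y₂, σ(x₂)·y₁, σ(x₂)·y₂, σ(y₁)·x₁, σ(y₁)·x₂, σ(y₂)·x₁, σ(y₂)·x₂} has exactly 3 elements. Then σ(xᵢ)·yⱼ = σ(yⱼ)·xᵢ for all 1 ≤ i, j ≤ 2. -/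
private lemma aux_zpow2 {G : Type*} [Group G] (u : G) : u ^ (2:ℤ) = u * u := by
  rw [show (2:ℤ) = 1 + 1 by norm_num, zpow_add, zpow_one]

private lemma aux_upow {G : Type*} [Group G] [Fintype G]
    (hp : 3 < (Fintype.card G).minFac) (u : G) (hu : u ≠ 1)
    (m : ℤ) (hm : m ≠ 0) (hm4 : m.natAbs ≤ 4) : u ^ m ≠ 1 := by
  intro h
  have hdvd : ((orderOf u : ℤ)) ∣ m := orderOf_dvd_iff_zpow_eq_one.mpr h
  have h2 : orderOf u ∣ m.natAbs := by
    have := Int.natAbs_dvd_natAbs.mpr hdvd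
    simpa using this
  have hpos : 0 < m.natAbs := Int.natAbs_pos.mpr hm
  have hle : orderOf u ≤ 4 := le_trans (Nat.le_of_dvd hpos h2) hm4
  have h1 : orderOf u ≠ 1 := fun hh => hu (orderOf_eq_one_iff.mp hh)
  have hge : 0 < orderOf u := orderOf_pos u
  have hcd : orderOf u ∣ Fintype.card G := orderOf_dvd_card
  have hcases : orderOf u = 2 ∨ orderOf u = 3 ∨ orderOf u = 4 := by omega
  rcases hcases with hh | hh | hh
  · have hd : (2:ℕ) ∣ Fintype.card G := hh ▸ hcd
    have := Nat.minFac_le_of_dvd (by norm_num) hd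
    omega
  · have hd : (3:ℕ) ∣ Fintype.card G := hh ▸ hcd
    have := Nat.minFac_le_of_dvd (by norm_num) hd
    omega
  · have h4 : (4:ℕ) ∣ Fintype.card G := hh ▸ hcd
    have hd : (2:ℕ) ∣ Fintype.card G := dvd_trans (by norm_num) h4
    have := Nat.minFac_le_of_dvd (by norm_num) hd
    omega

private lemma aux_odd_inv {G : Type*} [Group G] [Fintype G]
    (hp : 3 < (Fintype.card G).minFac) (u c : G) (hu : u ≠ 1)
    (h : u * c = c * u ^ (-1 : ℤ)) : False := by
  have h' : u * c = c * u⁻¹ := by simpa using h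
  have hinv : u⁻¹ * c = c * u := by
    calc u⁻¹ * c = u⁻¹ * (c * u⁻¹) * u := by group
      _ = u⁻¹ * (u * c) * u := by rw [← h']
      _ = c * u := by group
  have hc2 : u * (c * c) = c * c * u := by
    calc u * (c * c) = (u * c) * c := by group
      _ = (c * u⁻¹) * c := by rw [h']
      _ = c * (u⁻¹ * c) := by group
      _ = c * (c * u) := by rw [hinv]
      _ = c * c * u := by group
  have hcomm : Commute u (c * c) := hc2
  have hodd2 : ¬ (2 ∣ Fintype.card G) := by
    intro hdd
    have := Nat.minFac_le_of_dvd (by norm_num) hdd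
    omega
  have hoc : orderOf c ∣ Fintype.card G := orderOf_dvd_card
  have hodd : Odd (orderOf c) := by
    rcases Nat.even_or_odd (orderOf c) with he | ho
    · exfalso
      obtain ⟨k, hk⟩ := he
      exact hodd2 (dvd_trans ⟨k, by omega⟩ hoc)
    · exact ho
  obtain ⟨k, hk⟩ := hodd
  have e1 : (c * c) ^ (k + 1) = c := by
    have e2 : (c * c) ^ (k + 1) = c ^ (2 * k + 1) * c := by
      have hee : 2 * k + 1 + 1 = 2 * (k + 1) := by omega
      rw [← sq, ← pow_mul, ← pow_succ, hee]
    rw [e2, ← hk, pow_orderOf_eq_one, one_mul]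
  have hcp : Commute u ((c * c) ^ (k + 1)) := hcomm.pow_right (k + 1)
  rw [e1] at hcp
  have huu : u = u⁻¹ := by
    have := (hcp.eq.symm).trans h'
    exact mul_left_cancel this
  apply aux_upow hp u hu 2 (by norm_num) (by decide)
  have h2 : u * u = 1 := by
    nth_rewrite 2 [huu]
    group
  calc u ^ (2:ℤ) = u * u := aux_zpow2 u
    _ = 1 := h2

private lemma aux_keyrel {G : Type*} [Group G] (w u c x y : G) (e0 e1 : ℤ)
    (h0 : x = c * (u ^ e0 * y)) (h1 : w * x = c * (u ^ e1 * y)) :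
    w * c = c * u ^ (e1 - e0) := by
  calc w * c = w * (c * (u ^ e0 * y)) * y⁻¹ * (u ^ e0)⁻¹ := by group
    _ = w * x * y⁻¹ * (u ^ e0)⁻¹ := by rw [← h0]
    _ = c * (u ^ e1 * y) * y⁻¹ * (u ^ e0)⁻¹ := by rw [h1]
    _ = c * u ^ (e1 - e0) := by group

private lemma aux_exp_eq {G : Type*} [Group G] (u c : G) (d1 d2 : ℤ)
    (K1 : u * c = c * u ^ d1) (K2 : u ^ (2:ℤ) * c = c * u ^ d2) :
    u ^ (2 * d1 - d2) = 1 := by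
  have hA : u ^ (2:ℤ) * c = c * u ^ (2 * d1) := by
    calc u ^ (2:ℤ) * c = u * (u * c) := by rw [aux_zpow2]; group
      _ = u * (c * u ^ d1) := by rw [K1]
      _ = (u * c) * u ^ d1 := by group
      _ = (c * u ^ d1) * u ^ d1 := by rw [K1]
      _ = c * u ^ (2 * d1) := by group
  calc u ^ (2 * d1 - d2) = c⁻¹ * (c * u ^ (2 * d1)) * u ^ (-d2) := by group
    _ = c⁻¹ * (u ^ (2:ℤ) * c) * u ^ (-d2) := by rw [← hA]
    _ = c⁻¹ * (c * u ^ d2) * u ^ (-d2) := by rw [K2]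
    _ = 1 := by group

private lemma aux_shift {G : Type*} [Group G] (Y X x w : G) (h : Y * x = X * w) :
    x = Y⁻¹ * X * w := by
  calc x = Y⁻¹ * (Y * x) := by group
    _ = Y⁻¹ * (X * w) := by rw [h]
    _ = Y⁻¹ * X * w := by group

set_option maxHeartbeats 1000000 in
private lemma aux_chase {G : Type*} [Group G] [Fintype G]
    (hp : 3 < (Fintype.card G).minFac) (c u x y : G) (hu : u ≠ 1)
    (H0 : x = c * (u ^ (0:ℤ) * y) ∨ x = c * (u ^ (1:ℤ) * y) ∨ x = c * (u ^ (2:ℤ) * y))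
    (H1 : u * x = c * (u ^ (0:ℤ) * y) ∨ u * x = c * (u ^ (1:ℤ) * y) ∨
      u * x = c * (u ^ (2:ℤ) * y))
    (H2 : u ^ (2:ℤ) * x = c * (u ^ (0:ℤ) * y) ∨ u ^ (2:ℤ) * x = c * (u ^ (1:ℤ) * y) ∨
      u ^ (2:ℤ) * x = c * (u ^ (2:ℤ) * y)) :
    x = c * y ∧ u * x = c * (u * y) ∧ u ^ (2:ℤ) * x = c * (u ^ (2:ℤ) * y) := by
  rcases H0 with h0|h0|h0 <;> rcases H1 with h1|h1|h1 <;> rcases H2 with h2|h2|h2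
  all_goals
    first
    | exact ⟨by simpa using h0, by simpa using h1, by simpa using h2⟩
    | exact absurd (aux_exp_eq u c _ _ (aux_keyrel u u c x y _ _ h0 h1)
        (aux_keyrel (u ^ (2:ℤ)) u c x y _ _ h0 h2))
        (aux_upow hp u hu _ (by decide) (by decide))
    | (have K1' : u * c = c := by simpa using aux_keyrel u u c x y _ _ h0 h1
       refine absurd ?_ hu
       calc u = u * c * c⁻¹ := by group
         _ = c * c⁻¹ := by rw [K1']
         _ = 1 := by group)
    | (have K1 := aux_keyrel u u c x y _ _ h0 h1
       have he : ((1:ℤ) - 2) = -1 := by norm_num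
       rw [he] at K1
       exact (aux_odd_inv hp u c hu K1).elim)

private lemma aux_card3 {α : Type*} [DecidableEq α] {a b c : α}
    (h1 : a ≠ b) (h2 : a ≠ c) (h3 : b ≠ c) : ({a, b, c} : Finset α).card = 3 := by
  rw [Finset.card_insert_of_notMem (by simp [h1, h2]),
    Finset.card_insert_of_notMem (by simp [h3]), Finset.card_singleton]

private lemma aux_card4 {α : Type*} [DecidableEq α] {a b c d : α}
    (h1 : a ≠ b) (h2 : a ≠ c) (h3 : a ≠ d) (h4 : b ≠ c) (h5 : b ≠ d) (h6 : c ≠ d) :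
    ({a, b, c, d} : Finset α).card = 4 := by
  rw [Finset.card_insert_of_notMem (by simp [h1, h2, h3]),
    Finset.card_insert_of_notMem (by simp [h4, h5]),
    Finset.card_insert_of_notMem (by simp [h6]), Finset.card_singleton]

set_option maxHeartbeats 1000000 in
private lemma aux_caseI {G : Type*} [Group G] [Fintype G] [DecidableEq G]
    (hp : 3 < (Fintype.card G).minFac) (σ : MulAut G)
    (x₁ x₂ y₁ y₂ : G) (hx : x₁ ≠ x₂) (hy : y₁ ≠ y₂)
    (hxx : σ x₁ * x₂ = σ x₂ * x₁) (hyy : σ y₁ * y₂ = σ y₂ * y₁)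
    (hcard : ({σ x₁ * y₁, σ x₁ * y₂, σ x₂ * y₁, σ x₂ * y₂,
        σ y₁ * x₁, σ y₁ * x₂, σ y₂ * x₁, σ y₂ * x₂} : Finset G).card = 3)
    (hv : x₁ * x₂⁻¹ = y₁ * y₂⁻¹) :
    (σ x₁ * y₁ = σ y₁ * x₁) ∧ (σ x₁ * y₂ = σ y₂ * x₁) ∧
      (σ x₂ * y₁ = σ y₁ * x₂) ∧ (σ x₂ * y₂ = σ y₂ * x₂) := by
  have hne : σ x₁ ≠ σ x₂ := fun h => hx (σ.injective h)
  obtain ⟨u, hu4⟩ : ∃ u, x₁ * x₂⁻¹ = u := ⟨_, rfl⟩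
  have hu : u ≠ 1 := by
    rw [← hu4]
    intro hcon
    exact hx (mul_inv_eq_one.mp hcon)
  have hvu : y₁ * y₂⁻¹ = u := hv.symm.trans hu4
  have hsx1 : σ x₁ = σ x₂ * u := by
    rw [← hu4]
    calc σ x₁ = σ x₁ * x₂ * x₂⁻¹ := by group
      _ = σ x₂ * x₁ * x₂⁻¹ := by rw [hxx]
      _ = σ x₂ * (x₁ * x₂⁻¹) := by group
  have hsy1 : σ y₁ = σ y₂ * u := by
    rw [← hvu]
    calc σ y₁ = σ y₁ * y₂ * y₂⁻¹ := by group
      _ = σ y₂ * y₁ * y₂⁻¹ := by rw [hyy]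
      _ = σ y₂ * (y₁ * y₂⁻¹) := by group
  have hxu : x₁ = u * x₂ := by rw [← hu4]; group
  have hyu : y₁ = u * y₂ := by rw [← hvu]; group
  have dA1 : σ x₁ * y₁ ≠ σ x₁ * y₂ := fun h => hy (mul_left_cancel h)
  have dA3 : σ x₁ * y₂ ≠ σ x₂ * y₂ := fun h => hne (mul_right_cancel h)
  have dA2 : σ x₁ * y₁ ≠ σ x₂ * y₂ := by
    intro h
    rw [hsx1, hyu] at h
    apply aux_upow hp u hu 2 (by norm_num) (by decide)
    calc u ^ (2:ℤ) = (σ x₂)⁻¹ * (σ x₂ * u * (u * y₂)) * y₂⁻¹ := by rw [aux_zpow2]; group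
      _ = (σ x₂)⁻¹ * (σ x₂ * y₂) * y₂⁻¹ := by rw [h]
      _ = 1 := by group
  have hAcard : ({σ x₁ * y₁, σ x₁ * y₂, σ x₂ * y₂} : Finset G).card = 3 :=
    aux_card3 dA1 dA2 dA3
  have hAsub : ({σ x₁ * y₁, σ x₁ * y₂, σ x₂ * y₂} : Finset G) ⊆
      ({σ x₁ * y₁, σ x₁ * y₂, σ x₂ * y₁, σ x₂ * y₂,
        σ y₁ * x₁, σ y₁ * x₂, σ y₂ * x₁, σ y₂ * x₂} : Finset G) := by
    intro a ha
    simp only [Finset.mem_insert, Finset.mem_singleton] at ha ⊢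
    rcases ha with rfl | rfl | rfl <;> simp
  have hAS := Finset.eq_of_subset_of_card_le hAsub (le_of_eq (hcard.trans hAcard.symm))
  have m0 : σ y₂ * x₂ ∈ ({σ x₁ * y₁, σ x₁ * y₂, σ x₂ * y₂} : Finset G) := by
    rw [hAS]; simp
  have m1 : σ y₂ * x₁ ∈ ({σ x₁ * y₁, σ x₁ * y₂, σ x₂ * y₂} : Finset G) := by
    rw [hAS]; simp
  have m2 : σ y₁ * x₁ ∈ ({σ x₁ * y₁, σ x₁ * y₂, σ x₂ * y₂} : Finset G) := by
    rw [hAS]; simp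
  simp only [Finset.mem_insert, Finset.mem_singleton] at m0 m1 m2
  rw [hsx1, hyu] at m0
  rw [hsx1, hxu, hyu] at m1
  rw [hsx1, hsy1, hxu, hyu] at m2
  have H0 : x₂ = (σ y₂)⁻¹ * σ x₂ * (u ^ (0:ℤ) * y₂) ∨
      x₂ = (σ y₂)⁻¹ * σ x₂ * (u ^ (1:ℤ) * y₂) ∨
      x₂ = (σ y₂)⁻¹ * σ x₂ * (u ^ (2:ℤ) * y₂) := by
    rcases m0 with h|h|h
    · exact Or.inr (Or.inr (aux_shift _ _ _ _ (h.trans (by simp only [zpow_zero, zpow_one, aux_zpow2]; group))))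
    · exact Or.inr (Or.inl (aux_shift _ _ _ _ (h.trans (by simp only [zpow_zero, zpow_one, aux_zpow2]; group))))
    · exact Or.inl (aux_shift _ _ _ _ (h.trans (by simp only [zpow_zero, zpow_one, aux_zpow2]; group)))
  have H1 : u * x₂ = (σ y₂)⁻¹ * σ x₂ * (u ^ (0:ℤ) * y₂) ∨
      u * x₂ = (σ y₂)⁻¹ * σ x₂ * (u ^ (1:ℤ) * y₂) ∨
      u * x₂ = (σ y₂)⁻¹ * σ x₂ * (u ^ (2:ℤ) * y₂) := by
    rcases m1 with h|h|h
    · exact Or.inr (Or.inr (aux_shift _ _ _ _ (h.trans (by simp only [zpow_zero, zpow_one, aux_zpow2]; group))))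
    · exact Or.inr (Or.inl (aux_shift _ _ _ _ (h.trans (by simp only [zpow_zero, zpow_one, aux_zpow2]; group))))
    · exact Or.inl (aux_shift _ _ _ _ (h.trans (by simp only [zpow_zero, zpow_one, aux_zpow2]; group)))
  have H2 : u ^ (2:ℤ) * x₂ = (σ y₂)⁻¹ * σ x₂ * (u ^ (0:ℤ) * y₂) ∨
      u ^ (2:ℤ) * x₂ = (σ y₂)⁻¹ * σ x₂ * (u ^ (1:ℤ) * y₂) ∨
      u ^ (2:ℤ) * x₂ = (σ y₂)⁻¹ * σ x₂ * (u ^ (2:ℤ) * y₂) := by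
    rcases m2 with h|h|h
    · exact Or.inr (Or.inr (aux_shift _ _ _ _
        ((by rw [aux_zpow2]; group : (σ y₂) * (u ^ (2:ℤ) * x₂) = σ y₂ * u * (u * x₂)).trans
          (h.trans (by simp only [zpow_zero, zpow_one, aux_zpow2]; group)))))
    · exact Or.inr (Or.inl (aux_shift _ _ _ _
        ((by rw [aux_zpow2]; group : (σ y₂) * (u ^ (2:ℤ) * x₂) = σ y₂ * u * (u * x₂)).trans
          (h.trans (by simp only [zpow_zero, zpow_one, aux_zpow2]; group)))))
    · exact Or.inl (aux_shift _ _ _ _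
        ((by rw [aux_zpow2]; group : (σ y₂) * (u ^ (2:ℤ) * x₂) = σ y₂ * u * (u * x₂)).trans
          (h.trans (by simp only [zpow_zero, zpow_one, aux_zpow2]; group))))
  obtain ⟨C0, C1, C2⟩ := aux_chase hp ((σ y₂)⁻¹ * σ x₂) u x₂ y₂ hu H0 H1 H2
  refine ⟨?_, ?_, ?_, ?_⟩
  · rw [hsx1, hsy1, hxu, hyu]
    calc σ x₂ * u * (u * y₂) = σ y₂ * ((σ y₂)⁻¹ * σ x₂ * (u ^ (2:ℤ) * y₂)) := by
          rw [aux_zpow2]; group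
      _ = σ y₂ * (u ^ (2:ℤ) * x₂) := by rw [← C2]
      _ = σ y₂ * u * (u * x₂) := by rw [aux_zpow2]; group
  · rw [hsx1, hxu]
    calc σ x₂ * u * y₂ = σ y₂ * ((σ y₂)⁻¹ * σ x₂ * (u * y₂)) := by group
      _ = σ y₂ * (u * x₂) := by rw [← C1]
  · rw [hsy1, hyu]
    calc σ x₂ * (u * y₂) = σ y₂ * ((σ y₂)⁻¹ * σ x₂ * (u * y₂)) := by group
      _ = σ y₂ * (u * x₂) := by rw [← C1]
      _ = σ y₂ * u * x₂ := by group
  · calc σ x₂ * y₂ = σ y₂ * ((σ y₂)⁻¹ * σ x₂ * y₂) := by group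
      _ = σ y₂ * x₂ := by rw [← C0]

set_option maxHeartbeats 1000000 in
/-- Let `G` be a finite group with `p(G) > 3` and `σ` an automorphism of odd
order. Suppose `x₁ ≠ x₂`, `y₁ ≠ y₂`, `σ(x₁)·x₂ = σ(x₂)·x₁`,
`σ(y₁)·y₂ = σ(y₂)·y₁`, and the set of the eight products
`σ(xᵢ)·yⱼ, σ(yⱼ)·xᵢ` has exactly 3 elements. Then `σ(xᵢ)·yⱼ = σ(yⱼ)·xᵢ`
for all `i, j`. -/
theorem stmt_7 {G : Type*} [Group G] [Fintype G] [DecidableEq G]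
    (hp : 3 < (Fintype.card G).minFac) (σ : MulAut G) (hσ : Odd (orderOf σ))
    (x₁ x₂ y₁ y₂ : G) (hx : x₁ ≠ x₂) (hy : y₁ ≠ y₂)
    (hxx : σ x₁ * x₂ = σ x₂ * x₁) (hyy : σ y₁ * y₂ = σ y₂ * y₁)
    (hcard : ({σ x₁ * y₁, σ x₁ * y₂, σ x₂ * y₁, σ x₂ * y₂,
        σ y₁ * x₁, σ y₁ * x₂, σ y₂ * x₁, σ y₂ * x₂} : Finset G).card = 3) :
    (σ x₁ * y₁ = σ y₁ * x₁) ∧ (σ x₁ * y₂ = σ y₂ * x₁) ∧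
      (σ x₂ * y₁ = σ y₁ * x₂) ∧ (σ x₂ * y₂ = σ y₂ * x₂) := by
  have hne : σ x₁ ≠ σ x₂ := fun h => hx (σ.injective h)
  have hney : σ y₁ ≠ σ y₂ := fun h => hy (σ.injective h)
  have hsx0 : σ x₁ = σ x₂ * (x₁ * x₂⁻¹) := by
    calc σ x₁ = σ x₁ * x₂ * x₂⁻¹ := by group
      _ = σ x₂ * x₁ * x₂⁻¹ := by rw [hxx]
      _ = σ x₂ * (x₁ * x₂⁻¹) := by group
  have hsy0 : σ y₁ = σ y₂ * (y₁ * y₂⁻¹) := by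
    calc σ y₁ = σ y₁ * y₂ * y₂⁻¹ := by group
      _ = σ y₂ * y₁ * y₂⁻¹ := by rw [hyy]
      _ = σ y₂ * (y₁ * y₂⁻¹) := by group
  have tA1 : σ x₁ * y₁ = σ x₂ * y₂ → x₁ * x₂⁻¹ = y₂ * y₁⁻¹ := by
    intro h
    calc x₁ * x₂⁻¹ = (σ x₂)⁻¹ * (σ x₂ * (x₁ * x₂⁻¹) * y₁) * y₁⁻¹ := by group
      _ = (σ x₂)⁻¹ * (σ x₁ * y₁) * y₁⁻¹ := by rw [← hsx0]
      _ = (σ x₂)⁻¹ * (σ x₂ * y₂) * y₁⁻¹ := by rw [h]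
      _ = y₂ * y₁⁻¹ := by group
  have tA2 : σ x₁ * y₂ = σ x₂ * y₁ → x₁ * x₂⁻¹ = y₁ * y₂⁻¹ := by
    intro h
    calc x₁ * x₂⁻¹ = (σ x₂)⁻¹ * (σ x₂ * (x₁ * x₂⁻¹) * y₂) * y₂⁻¹ := by group
      _ = (σ x₂)⁻¹ * (σ x₁ * y₂) * y₂⁻¹ := by rw [← hsx0]
      _ = (σ x₂)⁻¹ * (σ x₂ * y₁) * y₂⁻¹ := by rw [h]
      _ = y₁ * y₂⁻¹ := by group
  have tB1 : σ y₁ * x₁ = σ y₂ * x₂ → y₁ * y₂⁻¹ = x₂ * x₁⁻¹ := by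
    intro h
    calc y₁ * y₂⁻¹ = (σ y₂)⁻¹ * (σ y₂ * (y₁ * y₂⁻¹) * x₁) * x₁⁻¹ := by group
      _ = (σ y₂)⁻¹ * (σ y₁ * x₁) * x₁⁻¹ := by rw [← hsy0]
      _ = (σ y₂)⁻¹ * (σ y₂ * x₂) * x₁⁻¹ := by rw [h]
      _ = x₂ * x₁⁻¹ := by group
  have tB2 : σ y₁ * x₂ = σ y₂ * x₁ → y₁ * y₂⁻¹ = x₁ * x₂⁻¹ := by
    intro h
    calc y₁ * y₂⁻¹ = (σ y₂)⁻¹ * (σ y₂ * (y₁ * y₂⁻¹) * x₂) * x₂⁻¹ := by group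
      _ = (σ y₂)⁻¹ * (σ y₁ * x₂) * x₂⁻¹ := by rw [← hsy0]
      _ = (σ y₂)⁻¹ * (σ y₂ * x₁) * x₂⁻¹ := by rw [h]
      _ = x₁ * x₂⁻¹ := by group
  have hA : σ x₁ * y₁ = σ x₂ * y₂ ∨ σ x₁ * y₂ = σ x₂ * y₁ := by
    by_contra hcon
    push_neg at hcon
    obtain ⟨hc1, hc2⟩ := hcon
    have hsub : ({σ x₁ * y₁, σ x₁ * y₂, σ x₂ * y₁, σ x₂ * y₂} : Finset G) ⊆
        ({σ x₁ * y₁, σ x₁ * y₂, σ x₂ * y₁, σ x₂ * y₂,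
          σ y₁ * x₁, σ y₁ * x₂, σ y₂ * x₁, σ y₂ * x₂} : Finset G) := by
      intro a ha
      simp only [Finset.mem_insert, Finset.mem_singleton] at ha ⊢
      rcases ha with rfl | rfl | rfl | rfl <;> simp
    have h4 : ({σ x₁ * y₁, σ x₁ * y₂, σ x₂ * y₁, σ x₂ * y₂} : Finset G).card = 4 :=
      aux_card4 (fun h => hy (mul_left_cancel h)) (fun h => hne (mul_right_cancel h))
        hc1 hc2 (fun h => hne (mul_right_cancel h)) (fun h => hy (mul_left_cancel h))
    have := Finset.card_le_card hsub
    rw [h4, hcard] at this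
    omega
  have hB : σ y₁ * x₁ = σ y₂ * x₂ ∨ σ y₁ * x₂ = σ y₂ * x₁ := by
    by_contra hcon
    push_neg at hcon
    obtain ⟨hc1, hc2⟩ := hcon
    have hsub : ({σ y₁ * x₁, σ y₁ * x₂, σ y₂ * x₁, σ y₂ * x₂} : Finset G) ⊆
        ({σ x₁ * y₁, σ x₁ * y₂, σ x₂ * y₁, σ x₂ * y₂,
          σ y₁ * x₁, σ y₁ * x₂, σ y₂ * x₁, σ y₂ * x₂} : Finset G) := by
      intro a ha
      simp only [Finset.mem_insert, Finset.mem_singleton] at ha ⊢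
      rcases ha with rfl | rfl | rfl | rfl <;> simp
    have h4 : ({σ y₁ * x₁, σ y₁ * x₂, σ y₂ * x₁, σ y₂ * x₂} : Finset G).card = 4 :=
      aux_card4 (fun h => hx (mul_left_cancel h)) (fun h => hney (mul_right_cancel h))
        hc1 hc2 (fun h => hney (mul_right_cancel h)) (fun h => hx (mul_left_cancel h))
    have := Finset.card_le_card hsub
    rw [h4, hcard] at this
    omega
  rcases hA with h | h <;> rcases hB with h' | h'
  · -- case II : u = v⁻¹, apply aux_caseI with y₁, y₂ swapped
    have hset : ({σ x₁ * y₂, σ x₁ * y₁, σ x₂ * y₂, σ x₂ * y₁,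
        σ y₂ * x₁, σ y₂ * x₂, σ y₁ * x₁, σ y₁ * x₂} : Finset G) =
        ({σ x₁ * y₁, σ x₁ * y₂, σ x₂ * y₁, σ x₂ * y₂,
          σ y₁ * x₁, σ y₁ * x₂, σ y₂ * x₁, σ y₂ * x₂} : Finset G) := by
      apply Finset.Subset.antisymm <;> intro a ha <;>
        simp only [Finset.mem_insert, Finset.mem_singleton] at ha ⊢ <;>
        rcases ha with rfl | rfl | rfl | rfl | rfl | rfl | rfl | rfl <;> simp
    have hcard' : ({σ x₁ * y₂, σ x₁ * y₁, σ x₂ * y₂, σ x₂ * y₁,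
        σ y₂ * x₁, σ y₂ * x₂, σ y₁ * x₁, σ y₁ * x₂} : Finset G).card = 3 := by
      rw [hset]; exact hcard
    obtain ⟨g1, g2, g3, g4⟩ :=
      aux_caseI hp σ x₁ x₂ y₂ y₁ hx (Ne.symm hy) hxx hyy.symm hcard' (tA1 h)
    exact ⟨g2, g1, g4, g3⟩
  · -- contradiction : y₁y₂⁻¹ = y₂y₁⁻¹
    exfalso
    have hne1 : y₁ * y₂⁻¹ ≠ 1 := fun hh => hy (mul_inv_eq_one.mp hh)
    apply aux_upow hp (y₁ * y₂⁻¹) hne1 2 (by norm_num) (by decide)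
    have comb : y₁ * y₂⁻¹ = y₂ * y₁⁻¹ := (tB2 h').trans (tA1 h)
    calc (y₁ * y₂⁻¹) ^ (2:ℤ) = (y₁ * y₂⁻¹) * (y₁ * y₂⁻¹) := aux_zpow2 _
      _ = (y₁ * y₂⁻¹) * (y₂ * y₁⁻¹) := by nth_rewrite 2 [comb]; rfl
      _ = 1 := by group
  · -- contradiction : x₁x₂⁻¹ = x₂x₁⁻¹
    exfalso
    have hne1 : x₁ * x₂⁻¹ ≠ 1 := fun hh => hx (mul_inv_eq_one.mp hh)
    apply aux_upow hp (x₁ * x₂⁻¹) hne1 2 (by norm_num) (by decide)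
    have comb : x₁ * x₂⁻¹ = x₂ * x₁⁻¹ := (tA2 h).trans (tB1 h')
    calc (x₁ * x₂⁻¹) ^ (2:ℤ) = (x₁ * x₂⁻¹) * (x₁ * x₂⁻¹) := aux_zpow2 _
      _ = (x₁ * x₂⁻¹) * (x₂ * x₁⁻¹) := by nth_rewrite 2 [comb]; rfl
      _ = 1 := by group
  · -- case I : u = v
    exact aux_caseI hp σ x₁ x₂ y₁ y₂ hx hy hxx hyy hcard (tA2 h)
end

section
/- Let G be a finite group of odd order and let σ be an automorphism of G of odd order. Let x₁, x₂, y ∈ G. If σ(x₁)·y = σ(y)·x₂ and σ(x₂)·y = σ(y)·x₁, then x₁ = x₂. -/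
/-- Let `G` be a finite group of odd order and `σ` an automorphism of odd
order. If `σ(x₁)·y = σ(y)·x₂` and `σ(x₂)·y = σ(y)·x₁`, then `x₁ = x₂`. -/
theorem stmt_9 {G : Type*} [Group G] [Fintype G] (hG : Odd (Fintype.card G))
    (σ : MulAut G) (hσ : Odd (orderOf σ)) (x₁ x₂ y : G)
    (h1 : σ x₁ * y = σ y * x₂) (h2 : σ x₂ * y = σ y * x₁) :
    x₁ = x₂ := by
  set a : G := (σ y)⁻¹ with ha
  set T : Equiv.Perm G :=
    Equiv.trans σ.toEquiv ((Equiv.mulLeft a).trans (Equiv.mulRight y)) with hTdef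
  have hT : ∀ x : G, T x = a * σ x * y := fun x => rfl
  set k := orderOf σ with hk
  set n := Fintype.card G with hn
  -- T^m is affine in σ^m
  have key : ∀ m : ℕ, ∃ A B : G, ∀ x : G, (T ^ m) x = A * (σ ^ m) x * B := by
    intro m
    induction m with
    | zero => exact ⟨1, 1, fun x => by simp⟩
    | succ m ih =>
      obtain ⟨A, B, h⟩ := ih
      refine ⟨a * σ A, σ B * y, fun x => ?_⟩
      have h1' : (T ^ (m + 1)) x = T ((T ^ m) x) := by
        rw [pow_succ']; rfl
      have h2' : ((σ : MulAut G) ^ (m + 1)) x = σ (((σ : MulAut G) ^ m) x) := by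
        rw [pow_succ']; rfl
      rw [h1', h, hT, h2']
      simp [mul_assoc]
  obtain ⟨A, B, hAB⟩ := key k
  have hσk : (σ : MulAut G) ^ k = 1 := pow_orderOf_eq_one σ
  have hAB' : ∀ x : G, (T ^ k) x = A * x * B := by
    intro x; have := hAB x; rwa [hσk] at this
  have key2 : ∀ m : ℕ, ∀ x : G, ((T ^ k) ^ m) x = A ^ m * x * B ^ m := by
    intro m
    induction m with
    | zero => intro x; simp
    | succ m ih =>
      intro x
      have h1' : ((T ^ k) ^ (m + 1)) x = (T ^ k) (((T ^ k) ^ m) x) := by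
        rw [pow_succ']; rfl
      rw [h1', ih, hAB', pow_succ', pow_succ']
      group
  have hTkn : T ^ (k * n) = 1 := by
    ext x
    rw [pow_mul]
    have := key2 n x
    rw [this]
    show A ^ n * x * B ^ n = x
    rw [hn, pow_card_eq_one, pow_card_eq_one]
    simp
  have hdvd : orderOf T ∣ k * n := orderOf_dvd_of_pow_eq_one hTkn
  have hodd : Odd (orderOf T) := by
    rcases Nat.even_or_odd (orderOf T) with he | ho
    · exfalso
      have h2 : 2 ∣ orderOf T := he.two_dvd
      have : 2 ∣ k * n := h2.trans hdvd
      have : Even (k * n) := even_iff_two_dvd.mpr this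
      exact (Nat.not_even_iff_odd.mpr (hσ.mul hG)) this
    · exact ho
  obtain ⟨m, hm⟩ := hodd
  have hTN : T ^ orderOf T = 1 := pow_orderOf_eq_one T
  -- T x₁ = x₂ and T x₂ = x₁
  have hx1 : T x₁ = x₂ := by
    rw [hT, ha, mul_assoc, h1, ← mul_assoc]
    simp
  have hx2 : T x₂ = x₁ := by
    rw [hT, ha, mul_assoc, h2, ← mul_assoc]
    simp
  have hfix : (T ^ 2) x₁ = x₁ := by
    have : (T ^ 2) x₁ = T (T x₁) := by rw [pow_two]; rfl
    rw [this, hx1, hx2]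
  have hfixpow : ∀ j : ℕ, ((T ^ 2) ^ j) x₁ = x₁ := by
    intro j
    induction j with
    | zero => rfl
    | succ j ih =>
      have : ((T ^ 2) ^ (j + 1)) x₁ = (T ^ 2) (((T ^ 2) ^ j) x₁) := by
        rw [pow_succ']; rfl
      rw [this, ih, hfix]
  have hTfix : T x₁ = x₁ := by
    have h1' : T = T ^ (orderOf T + 1) := by
      rw [pow_succ, hTN, one_mul]
    have h2' : orderOf T + 1 = 2 * (m + 1) := by omega
    calc T x₁ = (T ^ (orderOf T + 1)) x₁ := by rw [← h1']
      _ = ((T ^ 2) ^ (m + 1)) x₁ := by rw [h2', pow_mul]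
      _ = x₁ := hfixpow (m + 1)
  rw [← hx1, hTfix]
end

section
/- Let G be a finite group, let h ∈ G, and let S be a non-empty subset of G with |S| < p(G), where p(G) is the least prime factor of |G|. If h·S = S (i.e., the left translate of S by h equals S), then h is the identity element of G. -/
/-- If `S` is a non-empty subset of a finite group `G` with `|S| < p(G)` and
`h·S = S`, then `h = 1`. -/
theorem stmt_10 {G : Type*} [Group G] [Fintype G] [DecidableEq G] (h : G) (S : Finset G)
    (hS : S.Nonempty) (hsmall : S.card < (Fintype.card G).minFac)
    (hfix : S.image (fun s => h * s) = S) :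
    h = 1 := by
  by_contra hne
  have hmul : ∀ x ∈ S, h * x ∈ S := by
    intro x hx
    rw [← hfix]
    exact Finset.mem_image_of_mem _ hx
  have hpow : ∀ k : ℕ, ∀ x ∈ S, h ^ k * x ∈ S := by
    intro k
    induction k with
    | zero => simp
    | succ n ih =>
      intro x hx
      have := hmul _ (ih x hx)
      rwa [← mul_assoc, ← pow_succ'] at this
  obtain ⟨s, hs⟩ := hS
  have hinj : Set.InjOn (fun k : ℕ => h ^ k * s) (Finset.range (orderOf h)) := by
    intro a ha b hb hab
    simp only [Finset.coe_range, Set.mem_Iio] at ha hb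
    have : h ^ a = h ^ b := mul_right_cancel hab
    exact pow_injOn_Iio_orderOf (by simpa using ha) (by simpa using hb) this
  have hsub : (Finset.range (orderOf h)).image (fun k => h ^ k * s) ⊆ S := by
    intro x hx
    obtain ⟨k, _, rfl⟩ := Finset.mem_image.mp hx
    exact hpow k s hs
  have hcard : orderOf h ≤ S.card := by
    calc orderOf h = ((Finset.range (orderOf h)).image (fun k => h ^ k * s)).card := by
          rw [Finset.card_image_of_injOn hinj, Finset.card_range]
      _ ≤ S.card := Finset.card_le_card hsub
  have h2 : 2 ≤ orderOf h := by
    rcases Nat.lt_or_ge (orderOf h) 2 with hlt | hge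
    · interval_cases hh : orderOf h
      · exact absurd hh (orderOf_eq_zero_iff.not.mpr (by simp [isOfFinOrder_of_finite]))
      · exact absurd (orderOf_eq_one_iff.mp hh) hne
    · exact hge
  have := Nat.minFac_le_of_dvd h2 (orderOf_dvd_card)
  omega
end

section
/- Let G be a group and let σ be an automorphism of G. Let x₁, x₂, y₁, y₂ ∈ G satisfy σ(y₁)·y₂ = σ(y₂)·y₁, σ(y₂)·x₂ = σ(x₁)·y₂, and σ(y₁)·x₂ = σ(x₂)·y₁. Then σ(x₁)·y₁ = σ(y₁)·x₁. -/
/-- Let `σ` be an automorphism of a group `G`. If `σ(y₁)·y₂ = σ(y₂)·y₁`,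
`σ(y₂)·x₂ = σ(x₁)·y₂` and `σ(y₁)·x₂ = σ(x₂)·y₁`, then `σ(x₁)·y₁ = σ(y₁)·x₁`. -/
theorem stmt_12 {G : Type*} [Group G] (σ : MulAut G) (x₁ x₂ y₁ y₂ : G)
    (h1 : σ y₁ * y₂ = σ y₂ * y₁)
    (h2 : σ y₂ * x₂ = σ x₁ * y₂)
    (h3 : σ y₁ * x₂ = σ x₂ * y₁) :
    σ x₁ * y₁ = σ y₁ * x₁ := by
  have e1 : y₁ * σ.symm y₂ = y₂ * σ.symm y₁ := by
    have := congrArg σ.symm h1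
    simpa using this
  have e2 : y₂ * σ.symm x₂ = x₁ * σ.symm y₂ := by
    have := congrArg σ.symm h2
    simpa using this
  have e3 : y₁ * σ.symm x₂ = x₂ * σ.symm y₁ := by
    have := congrArg σ.symm h3
    simpa using this
  have hσx1 : σ x₁ = σ y₂ * x₂ * y₂⁻¹ := eq_mul_inv_of_mul_eq h2.symm
  have hx1 : x₁ = y₂ * σ.symm x₂ * (σ.symm y₂)⁻¹ := eq_mul_inv_of_mul_eq e2.symm
  have e1' : y₂⁻¹ * y₁ = σ.symm y₁ * (σ.symm y₂)⁻¹ := by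
    rw [inv_mul_eq_iff_eq_mul, ← mul_assoc, ← e1]
    group
  calc σ x₁ * y₁ = σ y₂ * (x₂ * (y₂⁻¹ * y₁)) := by rw [hσx1]; group
    _ = σ y₂ * (x₂ * σ.symm y₁) * (σ.symm y₂)⁻¹ := by rw [e1']; group
    _ = σ y₂ * (y₁ * σ.symm x₂) * (σ.symm y₂)⁻¹ := by rw [e3]
    _ = σ y₂ * y₁ * (σ.symm x₂ * (σ.symm y₂)⁻¹) := by group
    _ = σ y₁ * (y₂ * σ.symm x₂ * (σ.symm y₂)⁻¹) := by rw [← h1]; group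
    _ = σ y₁ * x₁ := by rw [← hx1]
end

section
/- Let G be a group and let σ be an automorphism of G. Let x₁, x₂, y₁, y₂ ∈ G satisfy σ(y₁)·y₂ = σ(y₂)·y₁ together with the five relations σ(x₂)·y₂ = σ(x₁)·y₁, σ(y₁)·x₂ = σ(x₁)·y₁, σ(y₂)·x₁ = σ(x₂)·y₁, σ(y₂)·x₂ = σ(x₁)·y₂, and σ(y₁)·x₁ = σ(x₁)·y₂. Then (y₁·y₂⁻¹)³ is the identity element of G; in particular, if G is finite with p(G) > 3, then y₁ = y₂. -/
/-- Let `σ` be an automorphism of a group `G` and suppose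
`σ(y₁)·y₂ = σ(y₂)·y₁` together with the five listed relations. Then
`(y₁·y₂⁻¹)³ = 1`; in particular, if `G` is finite with `p(G) > 3`, then
`y₁ = y₂`. -/
theorem stmt_13 {G : Type*} [Group G] [Fintype G] (σ : MulAut G)
    (x₁ x₂ y₁ y₂ : G)
    (hyy : σ y₁ * y₂ = σ y₂ * y₁)
    (h1 : σ x₂ * y₂ = σ x₁ * y₁)
    (h2 : σ y₁ * x₂ = σ x₁ * y₁)
    (h3 : σ y₂ * x₁ = σ x₂ * y₁)
    (h4 : σ y₂ * x₂ = σ x₁ * y₂)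
    (h5 : σ y₁ * x₁ = σ x₁ * y₂) :
    (y₁ * y₂⁻¹) ^ 3 = 1 ∧ (3 < (Fintype.card G).minFac → y₁ = y₂) := by
  have hu : σ y₁ = σ y₂ * (y₁ * y₂⁻¹) := by
    rw [← mul_assoc, eq_mul_inv_iff_mul_eq, hyy]
  have hb : σ x₂ = σ x₁ * (y₁ * y₂⁻¹) := by
    rw [← mul_assoc, eq_mul_inv_iff_mul_eq, h1]
  have hx2 : x₂ = (σ y₂)⁻¹ * (σ x₁ * y₂) := by rw [← h4]; group
  have hx1 : x₁ = (σ y₂)⁻¹ * (σ x₂ * y₁) := by rw [← h3]; group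
  have hx1' : x₁ = (σ y₂)⁻¹ * (σ x₁ * (y₁ * y₂⁻¹) * y₁) := by rw [hb] at hx1; exact hx1
  have E1 : σ y₂ * (y₁ * y₂⁻¹) * (σ y₂)⁻¹ = σ x₁ * (y₁ * y₂⁻¹) * (σ x₁)⁻¹ := by
    apply mul_right_cancel (b := σ x₁ * y₂)
    calc σ y₂ * (y₁ * y₂⁻¹) * (σ y₂)⁻¹ * (σ x₁ * y₂)
        = σ y₁ * x₂ := by rw [hu, hx2]; group
      _ = σ x₁ * y₁ := h2
      _ = σ x₁ * (y₁ * y₂⁻¹) * (σ x₁)⁻¹ * (σ x₁ * y₂) := by group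
  have key : (y₁ * y₂⁻¹) * ((y₁ * y₂⁻¹) * y₁) = y₂ := by
    apply mul_left_cancel (a := σ x₁)
    calc σ x₁ * ((y₁ * y₂⁻¹) * ((y₁ * y₂⁻¹) * y₁))
        = (σ x₁ * (y₁ * y₂⁻¹) * (σ x₁)⁻¹) * (σ x₁ * ((y₁ * y₂⁻¹) * y₁)) := by group
      _ = (σ y₂ * (y₁ * y₂⁻¹) * (σ y₂)⁻¹) * (σ x₁ * ((y₁ * y₂⁻¹) * y₁)) := by rw [E1]
      _ = σ y₁ * x₁ := by conv_rhs => rw [hu, hx1']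
                          group
      _ = σ x₁ * y₂ := h5
  have cube : (y₁ * y₂⁻¹) ^ 3 = 1 := by
    rw [pow_succ, pow_two]
    calc y₁ * y₂⁻¹ * (y₁ * y₂⁻¹) * (y₁ * y₂⁻¹)
        = (y₁ * y₂⁻¹) * ((y₁ * y₂⁻¹) * y₁) * y₂⁻¹ := by group
      _ = y₂ * y₂⁻¹ := by rw [key]
      _ = 1 := mul_inv_cancel y₂
  refine ⟨cube, fun hp => ?_⟩
  have hdvd : orderOf (y₁ * y₂⁻¹) ∣ 3 := orderOf_dvd_of_pow_eq_one cube
  have h13 : orderOf (y₁ * y₂⁻¹) = 1 ∨ orderOf (y₁ * y₂⁻¹) = 3 :=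
    (Nat.prime_three.eq_one_or_self_of_dvd _ hdvd)
  rcases h13 with h1' | h3'
  · have : y₁ * y₂⁻¹ = 1 := orderOf_eq_one_iff.mp h1'
    exact mul_inv_eq_one.mp this
  · exfalso
    have hdvdc : 3 ∣ Fintype.card G := h3' ▸ orderOf_dvd_card
    have := Nat.minFac_le_of_dvd (by norm_num) hdvdc
    omega
end
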